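/- Let k ≥ 3 and let H be a hypergraph with minimum degree δ(H) ≥ 2^(k−2) + 2. Then H contains a Berge cycle of length at least k. -/

import Mathlib

set_option linter.unusedSectionVars false
set_option linter.unusedVariables false
set_option maxHeartbeats 1000000

/-- The degree of a vertex `v` in a hypergraph `H`: the number of hyperedges containing `v`. -/
def hDegree {V : Type*} [DecidableEq V] (H : Finset (Finset V)) (v : V) : ℕ :=
  (H.filter (fun e => v ∈ e)).card

/-- `H` has a Berge cycle of length `ℓ`: there are `ℓ` distinct vertices `v i` and `ℓ`
distinct hyperedges `e i` with `v i, v (i+1) ∈ e i` (cyclically). -/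
def HasBergeCycle {V : Type*} (H : Finset (Finset V)) (ℓ : ℕ) : Prop :=
  ∃ (v : Fin ℓ → V) (e : Fin ℓ → Finset V),
    Function.Injective v ∧ Function.Injective e ∧ (∀ i, e i ∈ H) ∧
    ∀ i : Fin ℓ, v i ∈ e i ∧ v ⟨(i.1 + 1) % ℓ, Nat.mod_lt _ i.pos⟩ ∈ e i

/-- `H` has a Berge Hamiltonian cycle: a Berge cycle whose representative vertices
are all the vertices. -/
def HasBergeHamCycle {V : Type*} [Fintype V] (H : Finset (Finset V)) : Prop :=
  ∃ (v : Fin (Fintype.card V) → V) (e : Fin (Fintype.card V) → Finset V),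
    Function.Bijective v ∧ Function.Injective e ∧ (∀ i, e i ∈ H) ∧
    ∀ i : Fin (Fintype.card V),
      v i ∈ e i ∧ v ⟨(i.1 + 1) % Fintype.card V, Nat.mod_lt _ i.pos⟩ ∈ e i

section Aux
variable {V : Type*} [DecidableEq V]

/-- A Berge path with `n` edges `e 0, …, e (n-1)` and `n+1` vertices `v 0, …, v n`. -/
def IsBP (H : Finset (Finset V)) (n : ℕ) (v : ℕ → V) (e : ℕ → Finset V) : Prop :=
  (∀ i j, i ≤ n → j ≤ n → v i = v j → i = j) ∧
  (∀ i j, i < n → j < n → e i = e j → i = j) ∧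
  (∀ i, i < n → e i ∈ H) ∧
  (∀ i, i < n → v i ∈ e i ∧ v (i + 1) ∈ e i)

lemma mk_cycle {H : Finset (Finset V)} (ℓ : ℕ) (hl : 0 < ℓ)
    (w : ℕ → V) (g : ℕ → Finset V)
    (hw : ∀ i j, i < ℓ → j < ℓ → w i = w j → i = j)
    (hg : ∀ i j, i < ℓ → j < ℓ → g i = g j → i = j)
    (hmem : ∀ i, i < ℓ → g i ∈ H)
    (hadj : ∀ i, i < ℓ → w i ∈ g i ∧ w ((i + 1) % ℓ) ∈ g i) :
    HasBergeCycle H ℓ := by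
  refine ⟨fun i => w i.1, fun i => g i.1, ?_, ?_, ?_, ?_⟩
  · intro i j hij; exact Fin.ext (hw i.1 j.1 i.2 j.2 hij)
  · intro i j hij; exact Fin.ext (hg i.1 j.1 i.2 j.2 hij)
  · intro i; exact hmem i.1 i.2
  · intro i; exact hadj i.1 i.2

lemma card_filter_powerset (M : Finset V) (a : V) (ha : a ∈ M) :
    ((M.powerset).filter (fun S => a ∈ S)).card = 2 ^ (M.card - 1) := by
  have himg : (M.powerset).filter (fun S => a ∈ S)
      = ((M.erase a).powerset).image (insert a) := by
    ext S
    simp only [Finset.mem_filter, Finset.mem_powerset, Finset.mem_image]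
    constructor
    · rintro ⟨hS, haS⟩
      refine ⟨S.erase a, ?_, Finset.insert_erase haS⟩
      intro x hx
      rw [Finset.mem_erase] at hx ⊢
      exact ⟨hx.1, hS hx.2⟩
    · rintro ⟨T, hT, rfl⟩
      refine ⟨?_, Finset.mem_insert_self a T⟩
      intro x hx
      rcases Finset.mem_insert.1 hx with rfl | hx
      · exact ha
      · exact Finset.mem_of_mem_erase (hT hx)
  rw [himg, Finset.card_image_of_injOn, Finset.card_powerset,
    Finset.card_erase_of_mem ha]
  intro S hS T hT hST
  rw [Finset.mem_coe, Finset.mem_powerset] at hS hT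
  have haS : a ∉ S := fun h => (Finset.mem_erase.1 (hS h)).1 rfl
  have haT : a ∉ T := fun h => (Finset.mem_erase.1 (hT h)).1 rfl
  rw [← Finset.erase_insert haS, ← Finset.erase_insert haT, hST]

lemma bp_le_card {H : Finset (Finset V)} {n v e} (h : IsBP H n v e) : n ≤ H.card := by
  obtain ⟨-, hinj, hmem, -⟩ := h
  have : (Finset.range n).card ≤ H.card := by
    apply Finset.card_le_card_of_injOn e
    · intro i hi; exact hmem i (Finset.mem_range.1 hi)
    · intro i hi j hj hij
      exact hinj i j (Finset.mem_range.1 hi) (Finset.mem_range.1 hj) hij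
  simpa using this

lemma exists_max_bp (H : Finset (Finset V)) [Nonempty V] :
    ∃ N v e, IsBP H N v e ∧ ∀ n' v' e', IsBP H n' v' e' → n' ≤ N := by
  classical
  set S : Finset ℕ := (Finset.range (H.card + 1)).filter
    (fun n => ∃ v e, IsBP H n v e) with hS
  have h0 : 0 ∈ S := by
    rw [hS, Finset.mem_filter, Finset.mem_range]
    refine ⟨by omega, fun _ => Classical.arbitrary V, fun _ => ∅, ?_⟩
    refine ⟨fun i j hi hj _ => by omega, fun i j hi _ _ => by omega,
      fun i hi => by omega, fun i hi => by omega⟩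
  have hne : S.Nonempty := ⟨0, h0⟩
  refine ⟨S.max' hne, ?_⟩
  have hmem := S.max'_mem hne
  obtain ⟨-, v, e, hbp⟩ := Finset.mem_filter.1 hmem
  refine ⟨v, e, hbp, ?_⟩
  intro n' v' e' h'
  apply Finset.le_max'
  exact Finset.mem_filter.2 ⟨Finset.mem_range.2 (by have := bp_le_card h'; omega), v', e', h'⟩

lemma extend_path {H : Finset (Finset V)} {n : ℕ} {v : ℕ → V} {e : ℕ → Finset V}
    (hbp : IsBP H n v e) (h : Finset V) (x : V)
    (hH : h ∈ H) (hun : ∀ j, j < n → h ≠ e j)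
    (hvn : v n ∈ h) (hx : x ∈ h) (hxnew : ∀ i, i ≤ n → x ≠ v i) :
    IsBP H (n + 1) (fun i => if i ≤ n then v i else x)
      (fun j => if j < n then e j else h) := by
  obtain ⟨hv, he, hm, ha⟩ := hbp
  refine ⟨?_, ?_, ?_, ?_⟩
  · intro i j hi hj hij
    by_cases h1 : i ≤ n <;> by_cases h2 : j ≤ n <;>
      simp only [if_pos, if_neg, h1, h2, if_true, if_false] at hij
    · exact hv i j h1 h2 hij
    · exact absurd hij.symm (hxnew i h1)
    · exact absurd hij (hxnew j h2)
    · omega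
  · intro i j hi hj hij
    by_cases h1 : i < n <;> by_cases h2 : j < n <;>
      simp only [if_pos, if_neg, h1, h2, if_true, if_false] at hij
    · exact he i j h1 h2 hij
    · exact absurd hij.symm (hun i h1)
    · exact absurd hij (hun j h2)
    · omega
  · intro i hi
    by_cases h1 : i < n <;> simp only [h1, if_true, if_false]
    · exact hm i h1
    · exact hH
  · intro i hi
    by_cases h1 : i < n
    · have e1 : i ≤ n := by omega
      have e2 : i + 1 ≤ n := by omega
      simp only [h1, e1, e2, if_true]
      exact ha i h1
    · have c2 : i ≤ n := by omega
      have c3 : ¬ (i + 1 ≤ n) := by omega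
      simp only [h1, c2, c3, if_true, if_false]
      have e0 : i = n := by omega
      rw [e0]
      exact ⟨hvn, hx⟩

lemma close_cycle {H : Finset (Finset V)} {n : ℕ} {v : ℕ → V} {e : ℕ → Finset V}
    (hbp : IsBP H n v e) (a : ℕ) (han : a ≤ n) (h : Finset V)
    (hH : h ∈ H) (hvn : v n ∈ h) (hva : v a ∈ h)
    (hne : ∀ j, a ≤ j → j < n → h ≠ e j) :
    HasBergeCycle H (n - a + 1) := by
  obtain ⟨hv, he, hm, ha⟩ := hbp
  apply mk_cycle (n - a + 1) (by omega) (fun i => v (a + i))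
    (fun i => if i < n - a then e (a + i) else h)
  · intro i j hi hj hij
    have := hv (a + i) (a + j) (by omega) (by omega) hij
    omega
  · intro i j hi hj hij
    by_cases h1 : i < n - a <;> by_cases h2 : j < n - a <;>
      simp only [h1, h2, if_true, if_false] at hij
    · have := he (a + i) (a + j) (by omega) (by omega) hij
      omega
    · exact absurd hij.symm (hne (a + i) (by omega) (by omega))
    · exact absurd hij (hne (a + j) (by omega) (by omega))
    · omega
  · intro i hi
    by_cases h1 : i < n - a <;> simp only [h1, if_true, if_false]
    · exact hm (a + i) (by omega)
    · exact hH
  · intro i hi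
    by_cases h1 : i < n - a
    · simp only [h1, if_true]
      have hmod : (i + 1) % (n - a + 1) = i + 1 := Nat.mod_eq_of_lt (by omega)
      rw [hmod]
      have := ha (a + i) (by omega)
      exact ⟨this.1, by rw [show a + (i + 1) = (a + i) + 1 by omega]; exact this.2⟩
    · have e0 : i = n - a := by omega
      subst e0
      simp only [h1, if_false]
      have hmod : (n - a + 1) % (n - a + 1) = 0 := Nat.mod_self _
      rw [hmod]
      constructor
      · rw [show a + (n - a) = n by omega]; exact hvn
      · rw [show a + 0 = a by omega]; exact hva

lemma reroute_path {H : Finset (Finset V)} {n : ℕ} {v : ℕ → V} {e : ℕ → Finset V}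
    (hbp : IsBP H n v e) (t : ℕ) (htn : t < n) (f : Finset V) (x : V)
    (hfH : f ∈ H) (hfun : ∀ j, j < n → f ≠ e j)
    (hvt : v t ∈ f) (hvn : v n ∈ f) (hx : x ∈ e t) (hxnew : ∀ i, i ≤ n → x ≠ v i) :
    ∃ v' e', IsBP H (n + 1) v' e' := by
  obtain ⟨hv, he, hm, ha⟩ := hbp
  set W : ℕ → V := fun j => if j ≤ t then v j else if j ≤ n then v (n + t + 1 - j) else x
    with hW
  set E : ℕ → Finset V := fun j =>
    if j < t then e j else if j = t then f else if j < n then e (n + t - j) else e t with hE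
  have Wv1 : ∀ j, j ≤ t → W j = v j := by
    intro j h; rw [hW]; simp only []; rw [if_pos h]
  have Wv2 : ∀ j, t < j → j ≤ n → W j = v (n + t + 1 - j) := by
    intro j h1 h2; rw [hW]; simp only []; rw [if_neg (by omega), if_pos h2]
  have Wv3 : ∀ j, n < j → W j = x := by
    intro j h1; rw [hW]; simp only []; rw [if_neg (by omega), if_neg (by omega)]
  have Ev1 : ∀ j, j < t → E j = e j := by
    intro j h; rw [hE]; simp only []; rw [if_pos h]
  have Ev2 : ∀ j, j = t → E j = f := by
    intro j h; rw [hE]; simp only []; rw [if_neg (by omega), if_pos h]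
  have Ev3 : ∀ j, t < j → j < n → E j = e (n + t - j) := by
    intro j h1 h2; rw [hE]; simp only []
    rw [if_neg (by omega), if_neg (by omega), if_pos h2]
  have Ev4 : ∀ j, n ≤ j → E j = e t := by
    intro j h1; rw [hE]; simp only []
    rw [if_neg (by omega), if_neg (by omega), if_neg (by omega)]
  refine ⟨W, E, ?_, ?_, ?_, ?_⟩
  · intro i j hi hj hij
    have ci : i ≤ t ∨ (t < i ∧ i ≤ n) ∨ n < i := by omega
    have cj : j ≤ t ∨ (t < j ∧ j ≤ n) ∨ n < j := by omega
    rcases ci with c1 | c1 | c1 <;> rcases cj with c2 | c2 | c2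
    · rw [Wv1 i c1, Wv1 j c2] at hij; exact hv i j (by omega) (by omega) hij
    · rw [Wv1 i c1, Wv2 j c2.1 c2.2] at hij
      have := hv _ _ (by omega) (by omega) hij; omega
    · rw [Wv1 i c1, Wv3 j c2] at hij; exact absurd hij.symm (hxnew i (by omega))
    · rw [Wv2 i c1.1 c1.2, Wv1 j c2] at hij
      have := hv _ _ (by omega) (by omega) hij; omega
    · rw [Wv2 i c1.1 c1.2, Wv2 j c2.1 c2.2] at hij
      have := hv _ _ (by omega) (by omega) hij; omega
    · rw [Wv2 i c1.1 c1.2, Wv3 j c2] at hij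
      exact absurd hij.symm (hxnew _ (by omega))
    · rw [Wv3 i c1, Wv1 j c2] at hij; exact absurd hij (hxnew j (by omega))
    · rw [Wv3 i c1, Wv2 j c2.1 c2.2] at hij; exact absurd hij (hxnew _ (by omega))
    · omega
  · intro i j hi hj hij
    have ci : i < t ∨ i = t ∨ (t < i ∧ i < n) ∨ n ≤ i := by omega
    have cj : j < t ∨ j = t ∨ (t < j ∧ j < n) ∨ n ≤ j := by omega
    rcases ci with c1 | c1 | c1 | c1 <;> rcases cj with c2 | c2 | c2 | c2
    · rw [Ev1 i c1, Ev1 j c2] at hij; exact he i j (by omega) (by omega) hij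
    · rw [Ev1 i c1, Ev2 j c2] at hij; exact absurd hij.symm (hfun i (by omega))
    · rw [Ev1 i c1, Ev3 j c2.1 c2.2] at hij
      have := he _ _ (by omega) (by omega) hij; omega
    · rw [Ev1 i c1, Ev4 j c2] at hij
      have := he _ _ (by omega) (by omega) hij; omega
    · rw [Ev2 i c1, Ev1 j c2] at hij; exact absurd hij (hfun j (by omega))
    · omega
    · rw [Ev2 i c1, Ev3 j c2.1 c2.2] at hij; exact absurd hij (hfun _ (by omega))
    · rw [Ev2 i c1, Ev4 j c2] at hij; exact absurd hij (hfun _ (by omega))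
    · rw [Ev3 i c1.1 c1.2, Ev1 j c2] at hij
      have := he _ _ (by omega) (by omega) hij; omega
    · rw [Ev3 i c1.1 c1.2, Ev2 j c2] at hij; exact absurd hij.symm (hfun _ (by omega))
    · rw [Ev3 i c1.1 c1.2, Ev3 j c2.1 c2.2] at hij
      have := he _ _ (by omega) (by omega) hij; omega
    · rw [Ev3 i c1.1 c1.2, Ev4 j c2] at hij
      have := he _ _ (by omega) (by omega) hij; omega
    · rw [Ev4 i c1, Ev1 j c2] at hij
      have := he _ _ (by omega) (by omega) hij; omega
    · rw [Ev4 i c1, Ev2 j c2] at hij; exact absurd hij.symm (hfun _ (by omega))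
    · rw [Ev4 i c1, Ev3 j c2.1 c2.2] at hij
      have := he _ _ (by omega) (by omega) hij; omega
    · omega
  · intro i hi
    have ci : i < t ∨ i = t ∨ (t < i ∧ i < n) ∨ n ≤ i := by omega
    rcases ci with c1 | c1 | c1 | c1
    · rw [Ev1 i c1]; exact hm i (by omega)
    · rw [Ev2 i c1]; exact hfH
    · rw [Ev3 i c1.1 c1.2]; exact hm _ (by omega)
    · rw [Ev4 i c1]; exact hm t htn
  · intro i hi
    have ci : i < t ∨ i = t ∨ (t < i ∧ i < n) ∨ i = n := by omega
    rcases ci with c1 | c1 | c1 | c1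
    · rw [Ev1 i c1, Wv1 i (by omega), Wv1 (i + 1) (by omega)]
      exact ha i (by omega)
    · rw [Ev2 i c1, Wv1 i (by omega), Wv2 (i + 1) (by omega) (by omega), c1,
        show n + t + 1 - (t + 1) = n by omega]
      exact ⟨hvt, hvn⟩
    · rw [Ev3 i c1.1 c1.2, Wv2 i (by omega) (by omega), Wv2 (i + 1) (by omega) (by omega),
        show n + t + 1 - i = (n + t - i) + 1 by omega,
        show n + t + 1 - (i + 1) = n + t - i by omega]
      have h5 := ha (n + t - i) (by omega)
      exact ⟨h5.2, h5.1⟩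
    · rw [Ev4 i (by omega), Wv2 i (by omega) (by omega), Wv3 (i + 1) (by omega), c1,
        show n + t + 1 - n = t + 1 by omega]
      exact ⟨(ha t htn).2, hx⟩

lemma reroute_cycle {H : Finset (Finset V)} {n : ℕ} {v : ℕ → V} {e : ℕ → Finset V}
    (hbp : IsBP H n v e) (i₀ t : ℕ) (hit : i₀ < t) (htn : t < n) (f : Finset V)
    (hfH : f ∈ H) (hfun : ∀ j, j < n → f ≠ e j)
    (hvt : v t ∈ f) (hvn : v n ∈ f) (hi0 : v i₀ ∈ e t) :
    HasBergeCycle H (n - i₀ + 1) := by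
  obtain ⟨hv, he, hm, ha⟩ := hbp
  set W : ℕ → V := fun j => if i₀ + j ≤ t then v (i₀ + j) else v (n + t + 1 - (i₀ + j))
    with hW
  set E : ℕ → Finset V := fun j =>
    if i₀ + j < t then e (i₀ + j) else if i₀ + j = t then f
    else if i₀ + j < n then e (n + t - (i₀ + j)) else e t with hE
  have Wv1 : ∀ j, i₀ + j ≤ t → W j = v (i₀ + j) := by
    intro j h; rw [hW]; simp only []; rw [if_pos h]
  have Wv2 : ∀ j, t < i₀ + j → W j = v (n + t + 1 - (i₀ + j)) := by
    intro j h1; rw [hW]; simp only []; rw [if_neg (by omega)]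
  have Ev1 : ∀ j, i₀ + j < t → E j = e (i₀ + j) := by
    intro j h; rw [hE]; simp only []; rw [if_pos h]
  have Ev2 : ∀ j, i₀ + j = t → E j = f := by
    intro j h; rw [hE]; simp only []; rw [if_neg (by omega), if_pos h]
  have Ev3 : ∀ j, t < i₀ + j → i₀ + j < n → E j = e (n + t - (i₀ + j)) := by
    intro j h1 h2; rw [hE]; simp only []
    rw [if_neg (by omega), if_neg (by omega), if_pos h2]
  have Ev4 : ∀ j, n ≤ i₀ + j → E j = e t := by
    intro j h1; rw [hE]; simp only []
    rw [if_neg (by omega), if_neg (by omega), if_neg (by omega)]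
  apply mk_cycle (n - i₀ + 1) (by omega) W E
  · intro i j hi hj hij
    have ci : i₀ + i ≤ t ∨ t < i₀ + i := by omega
    have cj : i₀ + j ≤ t ∨ t < i₀ + j := by omega
    rcases ci with c1 | c1 <;> rcases cj with c2 | c2
    · rw [Wv1 i c1, Wv1 j c2] at hij
      have := hv _ _ (by omega) (by omega) hij; omega
    · rw [Wv1 i c1, Wv2 j c2] at hij
      have := hv _ _ (by omega) (by omega) hij; omega
    · rw [Wv2 i c1, Wv1 j c2] at hij
      have := hv _ _ (by omega) (by omega) hij; omega
    · rw [Wv2 i c1, Wv2 j c2] at hij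
      have := hv _ _ (by omega) (by omega) hij; omega
  · intro i j hi hj hij
    have ci : i₀ + i < t ∨ i₀ + i = t ∨ (t < i₀ + i ∧ i₀ + i < n) ∨ n ≤ i₀ + i := by omega
    have cj : i₀ + j < t ∨ i₀ + j = t ∨ (t < i₀ + j ∧ i₀ + j < n) ∨ n ≤ i₀ + j := by omega
    rcases ci with c1 | c1 | c1 | c1 <;> rcases cj with c2 | c2 | c2 | c2 <;>
      first
        | omega
        | (rw [Ev2 i c1] at hij
           first
             | (rw [Ev1 j c2] at hij; exact absurd hij (hfun _ (by omega)))
             | (rw [Ev3 j c2.1 c2.2] at hij; exact absurd hij (hfun _ (by omega)))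
             | (rw [Ev4 j c2] at hij; exact absurd hij (hfun _ (by omega))))
        | (rw [Ev2 j c2] at hij
           first
             | (rw [Ev1 i c1] at hij; exact absurd hij.symm (hfun _ (by omega)))
             | (rw [Ev3 i c1.1 c1.2] at hij; exact absurd hij.symm (hfun _ (by omega)))
             | (rw [Ev4 i c1] at hij; exact absurd hij.symm (hfun _ (by omega))))
        | (first
            | rw [Ev1 i c1] at hij
            | rw [Ev3 i c1.1 c1.2] at hij
            | rw [Ev4 i c1] at hij
           first
            | rw [Ev1 j c2] at hij
            | rw [Ev3 j c2.1 c2.2] at hij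
            | rw [Ev4 j c2] at hij
           have := he _ _ (by omega) (by omega) hij; omega)
  · intro i hi
    have ci : i₀ + i < t ∨ i₀ + i = t ∨ (t < i₀ + i ∧ i₀ + i < n) ∨ n ≤ i₀ + i := by omega
    rcases ci with c1 | c1 | c1 | c1
    · rw [Ev1 i c1]; exact hm _ (by omega)
    · rw [Ev2 i c1]; exact hfH
    · rw [Ev3 i c1.1 c1.2]; exact hm _ (by omega)
    · rw [Ev4 i c1]; exact hm t htn
  · intro i hi
    have ci : i₀ + i < t ∨ i₀ + i = t ∨ (t < i₀ + i ∧ i₀ + i < n) ∨ i₀ + i = n := by omega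
    rcases ci with c1 | c1 | c1 | c1
    · have hmod : (i + 1) % (n - i₀ + 1) = i + 1 := Nat.mod_eq_of_lt (by omega)
      rw [hmod, Ev1 i c1, Wv1 i (by omega), Wv1 (i + 1) (by omega),
        show i₀ + (i + 1) = (i₀ + i) + 1 by omega]
      exact ha (i₀ + i) (by omega)
    · have hmod : (i + 1) % (n - i₀ + 1) = i + 1 := Nat.mod_eq_of_lt (by omega)
      rw [hmod, Ev2 i c1, Wv1 i (by omega), Wv2 (i + 1) (by omega), c1,
        show n + t + 1 - (i₀ + (i + 1)) = n by omega]
      exact ⟨hvt, hvn⟩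
    · have hmod : (i + 1) % (n - i₀ + 1) = i + 1 := Nat.mod_eq_of_lt (by omega)
      rw [hmod, Ev3 i c1.1 c1.2, Wv2 i (by omega), Wv2 (i + 1) (by omega),
        show n + t + 1 - (i₀ + i) = (n + t - (i₀ + i)) + 1 by omega,
        show n + t + 1 - (i₀ + (i + 1)) = n + t - (i₀ + i) by omega]
      have h5 := ha (n + t - (i₀ + i)) (by omega)
      exact ⟨h5.2, h5.1⟩
    · have hieq : i + 1 = n - i₀ + 1 := by omega
      have hmod : (i + 1) % (n - i₀ + 1) = 0 := by rw [hieq]; exact Nat.mod_self _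
      rw [hmod, Ev4 i (by omega), Wv2 i (by omega), Wv1 0 (by omega),
        show n + t + 1 - (i₀ + i) = t + 1 by omega, show i₀ + 0 = i₀ by omega]
      exact ⟨(ha t htn).2, hi0⟩

end Aux

theorem stmt_14 {V : Type*} [DecidableEq V] [Nonempty V] (k : ℕ) (hk : 3 ≤ k)
    (H : Finset (Finset V))
    (hδ : ∀ v : V, 2 ^ (k - 2) + 2 ≤ hDegree H v) :
    ∃ ℓ : ℕ, k ≤ ℓ ∧ HasBergeCycle H ℓ := by
  classical
  by_contra hcon
  push_neg at hcon
  obtain ⟨N, v, e, hbp, hmax⟩ := exists_max_bp H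
  obtain ⟨hv, he, hm, ha⟩ := hbp
  have hbp' : IsBP H N v e := ⟨hv, he, hm, ha⟩
  -- the set of edges containing the endpoint v N
  set A : Finset (Finset V) := H.filter (fun h => v N ∈ h) with hAdef
  have hA : 2 ^ (k - 2) + 2 ≤ A.card := hδ (v N)
  set Aused : Finset (Finset V) := A.filter (fun h => ∃ j, j < N ∧ h = e j) with hAuseddef
  set Aun : Finset (Finset V) := A \ Aused with hAundef
  have hsplit : Aun.card + Aused.card = A.card :=
    Finset.card_sdiff_add_card_eq_card (Finset.filter_subset _ _)
  have hAunmem : ∀ h, h ∈ Aun →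
      h ∈ H ∧ v N ∈ h ∧ ∀ j, j < N → h ≠ e j := by
    intro h hh
    rw [hAundef, Finset.mem_sdiff] at hh
    obtain ⟨hhA, hnot⟩ := hh
    have h1 : h ∈ H ∧ v N ∈ h := Finset.mem_filter.1 hhA
    refine ⟨h1.1, h1.2, ?_⟩
    intro j hj heq
    exact hnot (Finset.mem_filter.2 ⟨hhA, j, hj, heq⟩)
  -- every vertex of an unused edge containing v N lies on the path
  have claim0 : ∀ h, h ∈ Aun → ∀ x, x ∈ h → ∃ i, i ≤ N ∧ x = v i := by
    intro h hh x hx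
    by_contra hno
    push_neg at hno
    obtain ⟨hhH, hhvN, hhun⟩ := hAunmem h hh
    have := extend_path hbp' h x hhH hhun hhvN hx (fun i hi => hno i hi)
    have := hmax _ _ _ this
    omega
  -- the path vertices
  have hPVcard : ((Finset.range (N + 1)).image v).card = N + 1 := by
    rw [Finset.card_image_of_injOn, Finset.card_range]
    intro i hi j hj hij
    simp only [Finset.coe_range, Set.mem_Iio] at hi hj
    exact hv i j (by omega) (by omega) hij
  have hvNPV : v N ∈ (Finset.range (N + 1)).image v :=
    Finset.mem_image.2 ⟨N, by simp, rfl⟩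
  -- the path is not too short
  have hNk : k ≤ N + 2 := by
    by_contra hsmall
    push_neg at hsmall
    have hAunsub : Aun ⊆ ((Finset.range (N + 1)).image v).powerset.filter
        (fun S => v N ∈ S) := by
      intro h hh
      obtain ⟨hhH, hhvN, hhun⟩ := hAunmem h hh
      rw [Finset.mem_filter, Finset.mem_powerset]
      refine ⟨?_, hhvN⟩
      intro x hx
      obtain ⟨i, hiN, rfl⟩ := claim0 h hh x hx
      exact Finset.mem_image.2 ⟨i, by simp [Nat.lt_succ_iff, hiN], rfl⟩
    have hAunbd : Aun.card ≤ 2 ^ N := by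
      have := Finset.card_le_card hAunsub
      rwa [card_filter_powerset _ _ hvNPV, hPVcard, Nat.add_sub_cancel] at this
    have hAusedbd : Aused.card ≤ N := by
      have hsub : Aused ⊆ (Finset.range N).image e := by
        intro h hh
        rw [hAuseddef, Finset.mem_filter] at hh
        obtain ⟨-, j, hj, rfl⟩ := hh
        exact Finset.mem_image.2 ⟨j, Finset.mem_range.2 hj, rfl⟩
      calc Aused.card ≤ ((Finset.range N).image e).card := Finset.card_le_card hsub
        _ ≤ N := le_trans Finset.card_image_le (by simp)
    have p1 : 2 ^ N ≤ 2 ^ (k - 3) := Nat.pow_le_pow_right (by norm_num) (by omega)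
    have p2 : k - 3 < 2 ^ (k - 3) := Nat.lt_two_pow_self
    have p3 : 2 ^ (k - 2) = 2 ^ (k - 3) * 2 := by
      rw [show k - 2 = (k - 3) + 1 by omega, pow_succ]
    omega
  -- the last k-1 vertices of the path
  set L : Finset V := (Finset.Ico (N + 1 - (k - 1)) (N + 1)).image v with hLdef
  have hmemL : ∀ i, i ≤ N → N + 2 ≤ i + k → v i ∈ L := by
    intro i h1 h2
    rw [hLdef]
    exact Finset.mem_image.2 ⟨i, Finset.mem_Ico.2 ⟨by omega, by omega⟩, rfl⟩
  have hLcard : L.card = k - 1 := by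
    rw [hLdef, Finset.card_image_of_injOn, Nat.card_Ico]
    · omega
    · intro i hi j hj hij
      rw [Finset.coe_Ico, Set.mem_Ico] at hi hj
      exact hv i j (by omega) (by omega) hij
  have hvNL : v N ∈ L := hmemL N le_rfl (by omega)
  -- unused edges containing v N live inside L
  have claim1 : ∀ h, h ∈ Aun → h ⊆ L := by
    intro h hh x hx
    obtain ⟨i, hiN, rfl⟩ := claim0 h hh x hx
    obtain ⟨hhH, hhvN, hhun⟩ := hAunmem h hh
    by_cases hic : N + 2 ≤ i + k
    · exact hmemL i hiN hic
    · exfalso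
      have hcyc := close_cycle hbp' i hiN h hhH hhvN hx
        (fun j h1 h2 => hhun j h2)
      exact hcon (N - i + 1) (by omega) hcyc
  -- used edges containing v N have large index
  have claim2 : ∀ t, t < N → v N ∈ e t → N + 1 ≤ t + k := by
    intro t htN hvNe
    by_contra hsm
    push_neg at hsm
    have hcyc := close_cycle hbp' (t + 1) (by omega) (e t) (hm t htN) hvNe
      (ha t htN).2 (fun j h1 h2 heq => by have := he t j htN h2 heq; omega)
    exact hcon (N - (t + 1) + 1) (by omega) hcyc
  have hAusedbd : Aused.card ≤ k - 1 := by
    have hsub : Aused ⊆ (Finset.Ico (N + 1 - k) N).image e := by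
      intro h hh
      rw [hAuseddef, Finset.mem_filter] at hh
      obtain ⟨hhA, j, hj, rfl⟩ := hh
      have hvNe : v N ∈ e j := (Finset.mem_filter.1 hhA).2
      have := claim2 j hj hvNe
      exact Finset.mem_image.2 ⟨j, Finset.mem_Ico.2 ⟨by omega, hj⟩, rfl⟩
    calc Aused.card ≤ ((Finset.Ico (N + 1 - k) N).image e).card :=
          Finset.card_le_card hsub
      _ ≤ (Finset.Ico (N + 1 - k) N).card := Finset.card_image_le
      _ ≤ k - 1 := by rw [Nat.card_Ico]; omega
  -- the collection of subsets of L containing v N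
  set PowL : Finset (Finset V) := L.powerset.filter (fun S => v N ∈ S) with hPowLdef
  have hPowLcard : PowL.card = 2 ^ (k - 2) := by
    rw [hPowLdef, card_filter_powerset L (v N) hvNL, hLcard]
    congr 1
  -- existence of a suitable unused edge through v t and v N
  have claim3 : ∀ t, t < N → N + 2 ≤ t + k → ∃ f, f ∈ Aun ∧ v t ∈ f := by
    intro t htN htk
    by_contra hno
    push_neg at hno
    have hvtL : v t ∈ L := hmemL t (by omega) htk
    have hvtN : v N ≠ v t := fun hh => by have := hv N t le_rfl (by omega) hh; omega
    have hsub : Aun ⊆ ((L.erase (v t)).powerset).filter (fun S => v N ∈ S) := by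
      intro h hh
      rw [Finset.mem_filter, Finset.mem_powerset]
      obtain ⟨hhH, hhvN, -⟩ := hAunmem h hh
      refine ⟨?_, hhvN⟩
      intro x hx
      rw [Finset.mem_erase]
      refine ⟨?_, claim1 h hh hx⟩
      intro hxx
      exact hno h hh (hxx ▸ hx)
    have hbd : Aun.card ≤ 2 ^ (k - 3) := by
      have := Finset.card_le_card hsub
      rwa [card_filter_powerset _ _ (Finset.mem_erase.2 ⟨hvtN, hvNL⟩),
        Finset.card_erase_of_mem hvtL, hLcard,
        show k - 1 - 1 - 1 = k - 3 by omega] at this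
    have p2 : k - 3 < 2 ^ (k - 3) := Nat.lt_two_pow_self
    have p3 : 2 ^ (k - 2) = 2 ^ (k - 3) * 2 := by
      rw [show k - 2 = (k - 3) + 1 by omega, pow_succ]
    omega
  -- used edges containing v N with index ≥ N+2-k are inside L
  have claim4 : ∀ t, t < N → N + 2 ≤ t + k → v N ∈ e t → e t ⊆ L := by
    intro t htN htk hvNe
    by_contra hnsub
    obtain ⟨x, hx, hxL⟩ := Finset.not_subset.1 hnsub
    obtain ⟨f, hf, hvtf⟩ := claim3 t htN htk
    obtain ⟨hfH, hfvN, hfun⟩ := hAunmem f hf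
    by_cases hxp : ∃ i, i ≤ N ∧ x = v i
    · obtain ⟨i, hiN, rfl⟩ := hxp
      have hik : ¬ (N + 2 ≤ i + k) := fun hc => hxL (hmemL i hiN hc)
      have hit : i < t := by omega
      have hcyc := reroute_cycle hbp' i t hit htN f hfH hfun hvtf hfvN hx
      exact hcon (N - i + 1) (by omega) hcyc
    · push_neg at hxp
      obtain ⟨v', e', hbig⟩ := reroute_path hbp' t htN f x hfH hfun hvtf hfvN hx hxp
      have := hmax _ _ _ hbig
      omega
  -- final counting
  have hfinal : A ⊆ insert (e (N + 1 - k)) PowL := by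
    intro h hh
    have hhH : h ∈ H := (Finset.mem_filter.1 hh).1
    have hhvN : v N ∈ h := (Finset.mem_filter.1 hh).2
    by_cases hused : ∃ j, j < N ∧ h = e j
    · obtain ⟨t, htN, rfl⟩ := hused
      have h2 := claim2 t htN hhvN
      by_cases h3 : N + 2 ≤ t + k
      · have := claim4 t htN h3 hhvN
        exact Finset.mem_insert_of_mem
          (Finset.mem_filter.2 ⟨Finset.mem_powerset.2 this, hhvN⟩)
      · have : t = N + 1 - k := by omega
        rw [this]
        exact Finset.mem_insert_self _ _
    · have hhun : h ∈ Aun := by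
        rw [hAundef, Finset.mem_sdiff]
        refine ⟨hh, ?_⟩
        rw [hAuseddef, Finset.mem_filter]
        exact fun hc => hused hc.2
      exact Finset.mem_insert_of_mem
        (Finset.mem_filter.2 ⟨Finset.mem_powerset.2 (claim1 h hhun), hhvN⟩)
  have : A.card ≤ 2 ^ (k - 2) + 1 := by
    calc A.card ≤ (insert (e (N + 1 - k)) PowL).card := Finset.card_le_card hfinal
      _ ≤ PowL.card + 1 := Finset.card_insert_le _ _
      _ = 2 ^ (k - 2) + 1 := by rw [hPowLcard]
  omega
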